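/- Let n ≥ 2 and let q be a nonzero complex number. For every function L : ℂ → Mₙ(ℂ) such that for all z ∈ ℂ the matrix L(z) lies in M^s (i.e. det L(z) = 1, L(z)_{i,i+1} = −1 for 1 ≤ i ≤ n−1, and L(z)_{i,j} = 0 for j > i+1), there exists a unique function u : ℂ → Mₙ(ℂ) such that u(z) is lower unipotent for every z ∈ ℂ and the matrix u(qz)·L(z)·u(z)⁻¹ is in companion form for every z ∈ ℂ. (This is the cross-section theorem for the q-gauge action in the case G = SL(n): the gauge action of loops in the lower unipotent subgroup N on the cell M^s is free and the companion matrices form a cross-section.) -/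

import Mathlib

/-- A matrix is lower unipotent if it is lower triangular with all diagonal
entries equal to `1`. -/
def LowerUnipotent {n : ℕ} (A : Matrix (Fin n) (Fin n) ℂ) : Prop :=
  (∀ i, A i i = 1) ∧ ∀ i j : Fin n, (i : ℕ) < (j : ℕ) → A i j = 0

/-- `A ∈ Mˢ`: `det A = 1`, the superdiagonal entries equal `-1`, and all entries
above the superdiagonal vanish. -/
def InMs {n : ℕ} (A : Matrix (Fin n) (Fin n) ℂ) : Prop :=
  A.det = 1 ∧ (∀ i j : Fin n, (j : ℕ) = (i : ℕ) + 1 → A i j = -1) ∧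
    ∀ i j : Fin n, (i : ℕ) + 1 < (j : ℕ) → A i j = 0

/-- A matrix is in companion form: superdiagonal `-1`, the first `n-1` rows vanish
off the superdiagonal, and the lower-left corner entry is `1` (the remaining
entries of the last row are arbitrary). -/
def CompanionForm {n : ℕ} (A : Matrix (Fin n) (Fin n) ℂ) : Prop :=
  (∀ i j : Fin n, (j : ℕ) = (i : ℕ) + 1 → A i j = -1) ∧
  (∀ i j : Fin n, (i : ℕ) < n - 1 → (j : ℕ) ≠ (i : ℕ) + 1 → A i j = 0) ∧
  (∀ i j : Fin n, (i : ℕ) = n - 1 → (j : ℕ) = 0 → A i j = 1)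


noncomputable def rrow (n : ℕ) (q : ℂ) (L : ℂ → Matrix (Fin n) (Fin n) ℂ) :
    ℕ → ℂ → Fin n → ℂ
  | 0, _ => fun j => if (j : ℕ) = 0 then 1 else 0
  | k+1, z => fun j => -(∑ m, rrow n q L k (q*z) m * L z m j)

lemma rrow_shape (n : ℕ) (q : ℂ) (L : ℂ → Matrix (Fin n) (Fin n) ℂ)
    (hL : ∀ z : ℂ, (∀ i j : Fin n, (j : ℕ) = (i : ℕ) + 1 → L z i j = -1) ∧
      ∀ i j : Fin n, (i : ℕ) + 1 < (j : ℕ) → L z i j = 0) :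
    ∀ k, k < n → ∀ z : ℂ,
      (∀ j : Fin n, (j : ℕ) = k → rrow n q L k z j = 1) ∧
      (∀ j : Fin n, k < (j : ℕ) → rrow n q L k z j = 0) := by
  intro k
  induction k with
  | zero =>
    intro _ z
    constructor
    · intro j hj; simp [rrow, hj]
    · intro j hj
      have : (j : ℕ) ≠ 0 := by omega
      simp [rrow, this]
  | succ k ih =>
    intro hk z
    have hk' : k < n := Nat.lt_of_succ_lt hk
    obtain ⟨hd, hz⟩ := ih hk' (q * z)
    constructor
    · intro j hj
      have : (∑ m, rrow n q L k (q*z) m * L z m j) = -1 := by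
        rw [Finset.sum_eq_single (⟨k, hk'⟩ : Fin n)]
        · rw [hd ⟨k, hk'⟩ rfl, (hL z).1 ⟨k, hk'⟩ j hj, one_mul]
        · intro m _ hm
          rcases Nat.lt_or_ge (m : ℕ) k with h | h
          · rw [(hL z).2 m j (by omega), mul_zero]
          · have : k < (m : ℕ) := by
              rcases Nat.eq_or_lt_of_le h with h' | h'
              · exact absurd (Fin.ext h'.symm) hm
              · exact h'
            rw [hz m this, zero_mul]
        · simp
      simp [rrow, this]
    · intro j hj
      have : (∑ m, rrow n q L k (q*z) m * L z m j) = 0 := by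
        apply Finset.sum_eq_zero
        intro m _
        rcases Nat.lt_or_ge k (m : ℕ) with h | h
        · rw [hz m h, zero_mul]
        · rw [(hL z).2 m j (by omega), mul_zero]
      simp [rrow, this]

lemma corner_det (m : ℕ) (M : Matrix (Fin (m+1)) (Fin (m+1)) ℂ)
    (hrow : ∀ i : Fin (m+1), (i : ℕ) < m → ∀ j : Fin (m+1),
      M i j = (if (j : ℕ) = (i : ℕ) + 1 then -1 else 0))
    (hdet : M.det = 1) : M (Fin.last m) 0 = 1 := by
  have h := Matrix.det_succ_column_zero M
  rw [Finset.sum_eq_single (Fin.last m)] at h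
  · rw [Fin.succAbove_last] at h
    have hmin : M.submatrix Fin.castSucc Fin.succ = -(1 : Matrix (Fin m) (Fin m) ℂ) := by
      ext i j
      simp only [Matrix.submatrix_apply]
      rw [hrow i.castSucc (by simpa using i.isLt)]
      by_cases hij : i = j
      · subst hij; simp [Matrix.one_apply]
      · have h1 : ((j.succ : Fin (m+1)) : ℕ) ≠ ((i.castSucc : Fin (m+1)) : ℕ) + 1 := by
          simp only [Fin.val_succ, Fin.coe_castSucc]
          intro h'
          exact hij (Fin.ext (by omega))
        simp only [h1, if_false, Matrix.one_apply, hij, Matrix.neg_apply]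
        simp
    rw [hmin, Matrix.det_neg, Matrix.det_one, hdet] at h
    have h2 : ((-1 : ℂ) ^ m) * ((-1 : ℂ) ^ m) = 1 := by
      rw [← pow_add, ← two_mul, pow_mul]; norm_num
    simp only [Fintype.card_fin, mul_one, Fin.val_last] at h
    linear_combination (-(M (Fin.last m) 0)) * h2 - h
  · intro i _ hi
    have him : (i : ℕ) < m := by
      have := i.isLt
      rcases Nat.lt_or_ge (i : ℕ) m with h' | h'
      · exact h'
      · exact absurd (Fin.ext (by omega : (i : ℕ) = m)) hi
    rw [hrow i him 0]
    simp
  · simp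


lemma lowerUnipotent_det_one {n : ℕ} (A : Matrix (Fin n) (Fin n) ℂ)
    (h : LowerUnipotent A) : A.det = 1 := by
  rw [Matrix.det_of_lowerTriangular A
    (fun i j hij => h.2 i j (OrderDual.toDual_lt_toDual.mp hij))]
  exact Finset.prod_eq_one fun i _ => h.1 i


/-- The cross-section theorem for the q-gauge action in the case `G = SL(n)`:
for every function `L : ℂ → Mₙ(ℂ)` with values in the cell `Mˢ` there is a unique
function `u` with lower unipotent values such that the q-gauge transform
`z ↦ u(qz)·L(z)·u(z)⁻¹` is everywhere in companion form. -/
theorem crossSection_q_gauge_SLn (n : ℕ) (hn : 2 ≤ n) (q : ℂ) (hq : q ≠ 0)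
    (L : ℂ → Matrix (Fin n) (Fin n) ℂ) (hL : ∀ z : ℂ, InMs (L z)) :
    ∃! u : ℂ → Matrix (Fin n) (Fin n) ℂ,
      (∀ z : ℂ, LowerUnipotent (u z)) ∧
      ∀ z : ℂ, CompanionForm (u (q * z) * L z * (u z)⁻¹) := by
  obtain ⟨m, rfl⟩ : ∃ m, n = m + 1 := ⟨n - 1, by omega⟩
  have hL' : ∀ z : ℂ, (∀ i j : Fin (m+1), (j : ℕ) = (i : ℕ) + 1 → L z i j = -1) ∧
      ∀ i j : Fin (m+1), (i : ℕ) + 1 < (j : ℕ) → L z i j = 0 :=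
    fun z => ⟨(hL z).2.1, (hL z).2.2⟩
  have hshape := rrow_shape (m+1) q L hL'
  set u : ℂ → Matrix (Fin (m+1)) (Fin (m+1)) ℂ :=
    fun z => Matrix.of fun i j => rrow (m+1) q L (i : ℕ) z j with hu
  have hLU : ∀ z, LowerUnipotent (u z) := by
    intro z
    exact ⟨fun i => (hshape (i : ℕ) i.isLt z).1 i rfl,
           fun i j hij => (hshape (i : ℕ) i.isLt z).2 j hij⟩
  have hdetu : ∀ z, (u z).det = 1 := fun z => lowerUnipotent_det_one _ (hLU z)
  have hmulinv : ∀ z, u z * (u z)⁻¹ = 1 := fun z =>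
    Matrix.mul_nonsing_inv _ (by rw [hdetu z]; exact isUnit_one)
  -- key: (u(qz) * L z) row i equals minus row i+1 of u z
  have hkey : ∀ (z : ℂ) (i : Fin (m+1)) (hi1 : (i : ℕ) + 1 < m + 1) (j : Fin (m+1)),
      (u (q*z) * L z) i j = -(u z ⟨(i : ℕ) + 1, hi1⟩ j) := by
    intro z i hi1 j
    rw [Matrix.mul_apply]
    have : u z ⟨(i : ℕ) + 1, hi1⟩ j = rrow (m+1) q L ((i : ℕ) + 1) z j := rfl
    rw [this, show rrow (m+1) q L ((i : ℕ) + 1) z j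
        = -(∑ m', rrow (m+1) q L (i : ℕ) (q*z) m' * L z m' j) from rfl, neg_neg]
    rfl
  have hrowM : ∀ (z : ℂ) (i : Fin (m+1)), (i : ℕ) < m → ∀ j : Fin (m+1),
      (u (q*z) * L z * (u z)⁻¹) i j = (if (j : ℕ) = (i : ℕ) + 1 then -1 else 0) := by
    intro z i hi j
    have hi1 : (i : ℕ) + 1 < m + 1 := by omega
    rw [Matrix.mul_apply]
    have : ∀ m' : Fin (m+1), (u (q*z) * L z) i m' * (u z)⁻¹ m' j
        = -(u z ⟨(i : ℕ) + 1, hi1⟩ m' * (u z)⁻¹ m' j) := by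
      intro m'; rw [hkey z i hi1 m']; ring
    rw [Finset.sum_congr rfl fun m' _ => this m', Finset.sum_neg_distrib]
    rw [show (∑ m', u z ⟨(i : ℕ) + 1, hi1⟩ m' * (u z)⁻¹ m' j)
        = (u z * (u z)⁻¹) ⟨(i : ℕ) + 1, hi1⟩ j from (Matrix.mul_apply).symm]
    rw [hmulinv z, Matrix.one_apply]
    by_cases hej : (⟨(i : ℕ) + 1, hi1⟩ : Fin (m+1)) = j
    · have : (j : ℕ) = (i : ℕ) + 1 := by rw [← hej]
      simp [hej, this]
    · have : (j : ℕ) ≠ (i : ℕ) + 1 := fun h => hej (Fin.ext h.symm)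
      simp [hej, this]
  have hdetM : ∀ z, (u (q*z) * L z * (u z)⁻¹).det = 1 := by
    intro z
    rw [Matrix.det_mul, Matrix.det_mul, Matrix.det_nonsing_inv, hdetu, hdetu, (hL z).1]
    simp
  refine ⟨u, ⟨hLU, ?_⟩, ?_⟩
  · intro z
    refine ⟨?_, ?_, ?_⟩
    · intro i j hj
      have hi : (i : ℕ) < m := by have := j.isLt; omega
      rw [hrowM z i hi j]; simp [hj]
    · intro i j hi hj
      have hi' : (i : ℕ) < m := by omega
      rw [hrowM z i hi' j]; simp [hj]
    · intro i j hi hj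
      have hi' : i = Fin.last m := Fin.ext (by simpa using hi)
      have hj' : j = 0 := Fin.ext hj
      rw [hi', hj']
      exact corner_det m _ (fun i' hi'' j' => hrowM z i' hi'' j') (hdetM z)
  · rintro u' ⟨h1, h2⟩
    have hinv' : ∀ z, (u' z)⁻¹ * u' z = 1 := fun z =>
      Matrix.nonsing_inv_mul _ (by rw [lowerUnipotent_det_one _ (h1 z)]; exact isUnit_one)
    have heq : ∀ z, u' (q*z) * L z = (u' (q*z) * L z * (u' z)⁻¹) * u' z := by
      intro z; rw [Matrix.mul_assoc (u' (q*z) * L z), hinv', Matrix.mul_one]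
    have hrec : ∀ k (hk : k < m + 1) (z : ℂ) (j : Fin (m+1)),
        u' z ⟨k, hk⟩ j = rrow (m+1) q L k z j := by
      intro k
      induction k with
      | zero =>
        intro hk z j
        rcases Nat.eq_zero_or_pos (j : ℕ) with h | h
        · have hj0 : j = (⟨0, hk⟩ : Fin (m+1)) := Fin.ext h
          rw [hj0, (h1 z).1 ⟨0, hk⟩]
          simp [rrow]
        · rw [(h1 z).2 ⟨0, hk⟩ j h]
          have : (j : ℕ) ≠ 0 := by omega
          simp [rrow, this]
      | succ k ih =>
        intro hk z j
        have hk' : k < m + 1 := Nat.lt_of_succ_lt hk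
        obtain ⟨c1, c2, _⟩ := h2 z
        have hLHS : (u' (q*z) * L z) ⟨k, hk'⟩ j = -(rrow (m+1) q L (k+1) z j) := by
          rw [Matrix.mul_apply]
          rw [Finset.sum_congr rfl fun m' _ => by rw [ih hk' (q*z) m']]
          rw [show rrow (m+1) q L (k+1) z j
              = -(∑ m', rrow (m+1) q L k (q*z) m' * L z m' j) from rfl, neg_neg]
        have hRHS : ((u' (q*z) * L z * (u' z)⁻¹) * u' z) ⟨k, hk'⟩ j
            = -(u' z ⟨k+1, hk⟩ j) := by
          rw [Matrix.mul_apply]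
          rw [Finset.sum_eq_single (⟨k+1, hk⟩ : Fin (m+1))]
          · rw [c1 ⟨k, hk'⟩ ⟨k+1, hk⟩ rfl]; ring
          · intro b _ hb
            rw [c2 ⟨k, hk'⟩ b (show k < m + 1 - 1 by omega) (fun h => hb (Fin.ext h)), zero_mul]
          · simp
        have := congrFun (congrFun (heq z) ⟨k, hk'⟩) j
        rw [hLHS, hRHS] at this
        exact neg_injective this.symm ▸ (neg_injective this).symm ▸ rfl
    funext z
    ext i j
    exact hrec (i : ℕ) i.isLt z j
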